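/- Let (E, L) be a labeled graph and c : E^1 → G label consistent with c = C ∘ L. Then the map sending the labeled path L_1(μ, g) of the skew product labeled graph (E ×_c G, L_1) to the pair (L(μ), g) is a well-defined bijection from the set of labeled paths of (E ×_c G, L_1) onto L^+(E) × G, where 1 : E^1 → G is the constant function with value 1_G. -/

import Mathlib

structure DirGraph (V E : Type*) where
  r : E → V
  s : E → V

def IsPath {V E : Type*} (G : DirGraph V E) (l : List E) : Prop :=
  l ≠ [] ∧ List.Chain' (fun e f => G.r e = G.s f) l

def IsLabeledPath {V E Λ : Type*} (G : DirGraph V E) (ℒ : E → Λ) (β : List Λ) : Prop :=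
  ∃ l, IsPath G l ∧ l.map ℒ = β

def skewGraph {V E Γ : Type*} [Group Γ] (G : DirGraph V E) (c : E → Γ) :
    DirGraph (V × Γ) (E × Γ) where
  r p := (G.r p.1, p.2 * c p.1)
  s p := (G.s p.1, p.2)

def skewLabel {E Λ Γ : Type*} [Group Γ] (ℒ : E → Λ) (d : E → Γ) : E × Γ → Λ × Γ :=
  fun p => (ℒ p.1, p.2 * d p.1)

section Aux

variable {V E Λ Γ : Type*} [Group Γ]

/-- Lift an edge path to the skew product graph, starting at group element `g`. -/
def pathLift (c : E → Γ) : List E → Γ → List (E × Γ)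
  | [], _ => []
  | e :: l, g => (e, g) :: pathLift c l (g * c e)

/-- Canonical form of a labeled path of the skew product. -/
def wordLift (C : Λ → Γ) : List Λ → Γ → List (Λ × Γ)
  | [], _ => []
  | a :: β, g => (a, g) :: wordLift C β (g * C a)

lemma pathLift_map_fst (c : E → Γ) :
    ∀ (l : List E) (g : Γ), (pathLift c l g).map Prod.fst = l
  | [], _ => rfl
  | e :: l, g => by simp [pathLift, pathLift_map_fst c l]

lemma pathLift_chain (G : DirGraph V E) (c : E → Γ) :
    ∀ (l : List E) (g : Γ), List.Chain' (fun e f => G.r e = G.s f) l →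
      List.Chain' (fun p q => (skewGraph G c).r p = (skewGraph G c).s q) (pathLift c l g)
  | [], _, _ => List.isChain_nil
  | [_], _, _ => List.isChain_singleton _
  | e :: f :: l, g, h => by
      rw [List.Chain', List.isChain_cons_cons] at h
      refine List.isChain_cons_cons.2 ⟨?_, pathLift_chain G c (f :: l) (g * c e) h.2⟩
      simp [skewGraph, pathLift, h.1]

lemma skew_eq_wordLift (G : DirGraph V E) (ℒ : E → Λ) (c : E → Γ) (C : Λ → Γ)
    (hc : c = C ∘ ℒ) :
    ∀ l : List (E × Γ),
      List.Chain' (fun p q => (skewGraph G c).r p = (skewGraph G c).s q) l →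
      l.map (skewLabel ℒ fun _ => (1 : Γ)) =
        wordLift C (l.map (ℒ ∘ Prod.fst)) ((l.head?.map Prod.snd).getD 1)
  | [], _ => rfl
  | [(e, g)], _ => by simp [skewLabel, wordLift]
  | (e, g) :: (f, h) :: l, hch => by
      rw [List.Chain', List.isChain_cons_cons] at hch
      have h2 := skew_eq_wordLift G ℒ c C hc ((f, h) :: l) hch.2
      have hh : h = g * C (ℒ e) := by
        have := hch.1
        simp only [skewGraph, hc, Function.comp, Prod.mk.injEq] at this
        exact this.2.symm
      simp only [List.map_cons, wordLift, skewLabel, List.head?_cons, Option.map_some,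
        Option.getD_some, mul_one] at h2 ⊢
      rw [h2, hh]; rfl

/-- Any element of the source set is the word lift of its image data. -/
lemma mem_canon (G : DirGraph V E) (ℒ : E → Λ) (c : E → Γ) (C : Λ → Γ)
    (hc : c = C ∘ ℒ) (w : List (Λ × Γ))
    (hw : IsLabeledPath (skewGraph G c) (skewLabel ℒ fun _ => (1 : Γ)) w) :
    w = wordLift C (w.map Prod.fst) ((w.head?.map Prod.snd).getD 1) := by
  obtain ⟨l, ⟨-, hch⟩, rfl⟩ := hw
  have key := skew_eq_wordLift G ℒ c C hc l hch
  have h1 : (l.map (skewLabel ℒ fun _ => (1 : Γ))).map Prod.fst = l.map (ℒ ∘ Prod.fst) := by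
    simp [skewLabel, Function.comp_def]
  have h2 : ((l.map (skewLabel ℒ fun _ => (1 : Γ))).head?.map Prod.snd)
      = l.head?.map Prod.snd := by
    cases l with
    | nil => rfl
    | cons p l => simp [skewLabel]
  rw [h1, h2]
  exact key

end Aux

/-- If `c = C ∘ ℒ` is label consistent, then the map sending a labeled path
`ℒ_𝟏(μ, g)` of `(E ×_c Γ, ℒ_𝟏)` to `(ℒ(μ), g)` is a well-defined bijection from the
set of labeled paths of `(E ×_c Γ, ℒ_𝟏)` onto `ℒ⁺(E) × Γ`. -/
theorem stmt9 {V E Λ Γ : Type*} [Group Γ] (G : DirGraph V E) (ℒ : E → Λ)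
    (c : E → Γ) (C : Λ → Γ) (hc : c = C ∘ ℒ) :
    Set.BijOn
      (fun w : List (Λ × Γ) => ((w.map Prod.fst, (w.head?.map Prod.snd).getD 1) : List Λ × Γ))
      { w | IsLabeledPath (skewGraph G c) (skewLabel ℒ fun _ => (1 : Γ)) w }
      { p : List Λ × Γ | IsLabeledPath G ℒ p.1 } := by
  refine ⟨?_, ?_, ?_⟩
  · -- MapsTo
    rintro w ⟨l, ⟨hne, hch⟩, rfl⟩
    refine ⟨l.map Prod.fst, ⟨by simpa using hne, ?_⟩, ?_⟩
    · refine List.isChain_map_of_isChain Prod.fst ?_ hch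
      intro p q h
      have := congrArg Prod.fst h
      simpa [skewGraph] using this
    · simp [skewLabel, Function.comp_def]
  · -- InjOn
    intro w1 h1 w2 h2 heq
    simp only [Prod.mk.injEq] at heq
    rw [mem_canon G ℒ c C hc w1 h1, mem_canon G ℒ c C hc w2 h2, heq.1, heq.2]
  · -- SurjOn
    rintro ⟨β, g⟩ ⟨l, ⟨hne, hch⟩, rfl⟩
    refine ⟨(pathLift c l g).map (skewLabel ℒ fun _ => (1 : Γ)),
      ⟨pathLift c l g, ⟨?_, pathLift_chain G c l g hch⟩, rfl⟩, ?_⟩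
    · cases l with
      | nil => exact absurd rfl hne
      | cons e l => simp [pathLift]
    · have hfst : ((pathLift c l g).map (skewLabel ℒ fun _ => (1 : Γ))).map Prod.fst
          = l.map ℒ := by
        rw [List.map_map]
        have h0 : (Prod.fst ∘ skewLabel ℒ fun _ => (1 : Γ)) = ℒ ∘ Prod.fst := rfl
        rw [h0, ← List.map_map, pathLift_map_fst]
      cases l with
      | nil => exact absurd rfl hne
      | cons e l =>
        simp only [Prod.mk.injEq]
        exact ⟨hfst, by simp [pathLift, skewLabel]⟩
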